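/- Let α ∈ (0,1) and r > 0. Then the series Σ_{n=1}^∞ (Γ(nα+1)/Γ(n+1))·(1 - e^{-2iπnα})·r^{n(1-α)-1} converges and G_α(-r^+) = (2πi)^{-1} Σ_{n=1}^∞ (Γ(nα+1)/Γ(n+1))·(1 - e^{-2iπnα})·r^{n(1-α)-1}, where Γ is the Gamma function. -/

import Mathlib

open MeasureTheory Complex Set Filter

/-- The function `G_α` from Fourati's paper: for `z` in the slit plane,
`G_α(z) = (2πi)⁻¹ ∫_0^∞ (exp(-e^{-iπα} y^α z^{1-α}) - exp(-e^{iπα} y^α z^{1-α})) z⁻¹ e^{-y} dy`,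
all complex powers being principal branches. -/
noncomputable def Galpha (α : ℝ) (z : ℂ) : ℂ :=
  (2 * Real.pi * Complex.I)⁻¹ *
    ∫ y in Set.Ioi (0:ℝ),
      ((Complex.exp (-(Complex.exp (-(Real.pi * α : ℂ) * Complex.I)) * (y:ℂ) ^ (α:ℂ) * z ^ (1 - (α:ℂ))) -
        Complex.exp (-(Complex.exp ((Real.pi * α : ℂ) * Complex.I)) * (y:ℂ) ^ (α:ℂ) * z ^ (1 - (α:ℂ)))) / z) *
      Complex.exp (-(y:ℂ))

/-- The upper boundary value `G_α(-r^+)`. -/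
noncomputable def GalphaPlus (α r : ℝ) : ℂ :=
  (2 * Real.pi * Complex.I)⁻¹ *
    ∫ y in Set.Ioi (0:ℝ),
      ((Complex.exp ((r:ℂ) ^ (1 - (α:ℂ)) * (y:ℂ) ^ (α:ℂ)) -
        Complex.exp (Complex.exp (-(2 * Real.pi * α : ℂ) * Complex.I) * (r:ℂ) ^ (1 - (α:ℂ)) * (y:ℂ) ^ (α:ℂ))) / (r:ℂ)) *
      Complex.exp (-(y:ℂ))

/-- `θ_α(r) = -arg(G_α(-r^+))/π`. -/
noncomputable def thetaFun (α r : ℝ) : ℝ := -(GalphaPlus α r).arg / Real.pi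

/-- Zolotarev's integral formula for the density of the strictly `α`-stable
distribution with positivity parameter `ρ` (the integral is a real number; we take
the real part). -/
noncomputable def stableDensity (α ρ x : ℝ) : ℝ :=
  ((2 * Real.pi * Complex.I)⁻¹ *
    ∫ y in Set.Ioi (0:ℝ),
      ((Complex.exp (-(Complex.exp (-(Real.pi * ρ * α : ℂ) * Complex.I)) * (y:ℂ) ^ (α:ℂ) * (x:ℂ) ^ (-(α:ℂ))) -
        Complex.exp (-(Complex.exp ((Real.pi * ρ * α : ℂ) * Complex.I)) * (y:ℂ) ^ (α:ℂ) * (x:ℂ) ^ (-(α:ℂ)))) / (x:ℂ)) *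
      Complex.exp (-(y:ℂ))).re

/-- A function is completely monotone (on `(0,∞)`) if it is infinitely differentiable
there and `(-1)^n f^{(n)}(x) ≥ 0` for all `n` and `x > 0`. -/
def CompletelyMonotone (φ : ℝ → ℝ) : Prop :=
  ContDiffOn ℝ ⊤ φ (Set.Ioi 0) ∧
  ∀ (n : ℕ) (x : ℝ), 0 < x → 0 ≤ (-1 : ℝ) ^ n * iteratedDeriv n φ x

/-- A function `H` on `(0,∞)` is hyperbolically completely monotone if for every `u > 0`
the function `v ↦ H(uv)H(u/v)` is a completely monotone function of `v + 1/v`. -/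
def HCM (H : ℝ → ℝ) : Prop :=
  ∀ u : ℝ, 0 < u → ∃ φ : ℝ → ℝ, CompletelyMonotone φ ∧
    ∀ v : ℝ, 0 < v → H (u * v) * H (u / v) = φ (v + 1 / v)


private lemma rpow_linear_bound {α : ℝ} (hα0 : 0 < α) (hα1 : α < 1) {ε : ℝ} (hε : 0 < ε) :
    ∃ C : ℝ, 0 ≤ C ∧ ∀ y : ℝ, 0 < y → y ^ α ≤ C + ε * y := by
  set K : ℝ := ε ^ (1 / (α - 1)) with hK
  have hKpos : 0 < K := Real.rpow_pos_of_pos hε _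
  refine ⟨K ^ α, (Real.rpow_pos_of_pos hKpos _).le, fun y hy => ?_⟩
  rcases le_total y K with h | h
  · have h1 : y ^ α ≤ K ^ α := Real.rpow_le_rpow hy.le h hα0.le
    nlinarith [mul_nonneg hε.le hy.le]
  · have h1 : y ^ (α - 1) ≤ K ^ (α - 1) :=
      Real.rpow_le_rpow_of_nonpos hKpos h (by linarith)
    have h2 : K ^ (α - 1) = ε := by
      rw [hK, ← Real.rpow_mul hε.le, one_div_mul_cancel (by intro hc; linarith [sub_eq_zero.mp hc] : α - 1 ≠ 0), Real.rpow_one]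
    have h3 : y ^ α = y ^ (α - 1) * y := by
      rw [← Real.rpow_add_one hy.ne' (α - 1), sub_add_cancel]
    have h4 : y ^ (α - 1) * y ≤ ε * y :=
      mul_le_mul_of_nonneg_right (h1.trans_eq h2) hy.le
    have h5 : 0 < K ^ α := Real.rpow_pos_of_pos hKpos _
    linarith [h3 ▸ h4]

private lemma integrable_exp_mul_rpow {α : ℝ} (hα0 : 0 < α) (hα1 : α < 1) {c : ℝ} (hc : 0 < c) :
    IntegrableOn (fun y : ℝ => Real.exp (-y) * Real.exp (c * y ^ α)) (Set.Ioi (0:ℝ)) := by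
  obtain ⟨C, hC0, hC⟩ := rpow_linear_bound hα0 hα1 (show (0:ℝ) < 1 / (2 * c) by positivity)
  have hg : IntegrableOn (fun y : ℝ => Real.exp (c * C) * Real.exp (-(1/2 : ℝ) * y)) (Set.Ioi (0:ℝ)) :=
    (exp_neg_integrableOn_Ioi 0 (by norm_num : (0:ℝ) < 1/2)).const_mul _
  refine hg.mono' ?_ ?_
  · exact ((Real.continuous_exp.comp continuous_neg).mul
      (Real.continuous_exp.comp (continuous_const.mul
        (Real.continuous_rpow_const hα0.le)))).aestronglyMeasurable
  · rw [ae_restrict_iff' measurableSet_Ioi]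
    refine ae_of_all _ fun y hy => ?_
    have hy0 : (0:ℝ) < y := hy
    have h1 : y ^ α ≤ C + (1 / (2 * c)) * y := hC y hy0
    have h2 : c * (1 / (2 * c)) = 1 / 2 := by field_simp
    rw [Real.norm_eq_abs, _root_.abs_of_nonneg (by positivity), ← Real.exp_add, ← Real.exp_add]
    apply Real.exp_le_exp.mpr
    have h3 : c * y ^ α ≤ c * C + c * ((1 / (2 * c)) * y) := by nlinarith
    rw [← mul_assoc, h2] at h3
    linarith

private lemma gamma_term_bound {α : ℝ} (hα0 : 0 < α) (hα1 : α < 1) {c : ℝ} (hc : 0 < c) (n : ℕ) :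
    Real.Gamma (α * ((n:ℝ) + 1) + 1) * c ^ (n+1) / ((Nat.factorial (n+1) : ℝ)) ≤
      ∫ y in Set.Ioi (0:ℝ), Real.exp (-y) * Real.exp (c * y ^ α) := by
  have hs : (0:ℝ) < α * ((n:ℝ) + 1) + 1 := by positivity
  have hG : Real.Gamma (α * ((n:ℝ) + 1) + 1)
      = ∫ y in Set.Ioi (0:ℝ), Real.exp (-y) * y ^ (α * ((n:ℝ) + 1)) := by
    rw [Real.Gamma_eq_integral hs]; norm_num
  have hGint : IntegrableOn (fun y : ℝ => Real.exp (-y) * y ^ (α * ((n:ℝ) + 1))) (Set.Ioi (0:ℝ)) := by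
    have := Real.GammaIntegral_convergent hs
    simpa using this
  have key : ∀ y ∈ Set.Ioi (0:ℝ),
      Real.exp (-y) * y ^ (α * ((n:ℝ) + 1)) * (c ^ (n+1) / ((Nat.factorial (n+1) : ℝ)))
        ≤ Real.exp (-y) * Real.exp (c * y ^ α) := by
    intro y hy
    have hy0 : (0:ℝ) < y := hy
    have hy_eq : y ^ (α * ((n:ℝ) + 1)) = (y ^ α) ^ (n+1) := by
      rw [show α * ((n:ℝ)+1) = α * (((n+1 : ℕ)):ℝ) by push_cast; ring,
        Real.rpow_mul hy0.le, Real.rpow_natCast]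
    have hp : (c * y ^ α) ^ (n+1) / ((Nat.factorial (n+1) : ℝ)) ≤ Real.exp (c * y ^ α) :=
      Real.pow_div_factorial_le_exp (x := c * y ^ α) (by positivity) (n+1)
    calc Real.exp (-y) * y ^ (α * ((n:ℝ) + 1)) * (c ^ (n+1) / ((Nat.factorial (n+1) : ℝ)))
        = Real.exp (-y) * ((c * y ^ α) ^ (n+1) / ((Nat.factorial (n+1) : ℝ))) := by
          rw [hy_eq, mul_pow]; ring
      _ ≤ Real.exp (-y) * Real.exp (c * y ^ α) :=
          mul_le_mul_of_nonneg_left hp (Real.exp_pos _).le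
  calc Real.Gamma (α * ((n:ℝ) + 1) + 1) * c ^ (n+1) / ((Nat.factorial (n+1) : ℝ))
      = ∫ y in Set.Ioi (0:ℝ),
          Real.exp (-y) * y ^ (α * ((n:ℝ) + 1)) * (c ^ (n+1) / ((Nat.factorial (n+1) : ℝ))) := by
        rw [mul_div_assoc, hG, ← integral_mul_const]
    _ ≤ ∫ y in Set.Ioi (0:ℝ), Real.exp (-y) * Real.exp (c * y ^ α) :=
        setIntegral_mono_on (hGint.mul_const _) (integrable_exp_mul_rpow hα0 hα1 hc)
          measurableSet_Ioi key

private lemma integral_ofReal'' {X : Type*} [MeasurableSpace X] {μ : MeasureTheory.Measure X}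
    {f : X → ℝ} : ∫ x, ((f x : ℝ) : ℂ) ∂μ = ((∫ x, f x ∂μ : ℝ) : ℂ) :=
  integral_ofReal


/-- Series expansion of the boundary value:
`G_α(-r^+) = (2πi)⁻¹ Σ_{n≥1} (Γ(nα+1)/Γ(n+1)) (1 - e^{-2iπnα}) r^{n(1-α)-1}`. -/
theorem GalphaPlus_series_expansion (α r : ℝ) (hα : α ∈ Set.Ioo (0:ℝ) 1) (hr : 0 < r) :
    HasSum
      (fun n : ℕ =>
        (2 * Real.pi * Complex.I)⁻¹ *
          ((Real.Gamma (((n:ℝ) + 1) * α + 1) / Real.Gamma (((n:ℝ) + 1) + 1) : ℝ) : ℂ) *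
          (1 - Complex.exp (-(2 * Real.pi * ((n:ℝ) + 1) * α : ℂ) * Complex.I)) *
          ((r ^ (((n:ℝ) + 1) * (1 - α) - 1) : ℝ) : ℂ))
      (GalphaPlus α r) := by
  obtain ⟨hα0, hα1⟩ := hα
  have hβ : (0:ℝ) < 1 - α := by linarith
  set ρ : ℝ := r ^ (1 - α) with hρdef
  have hρ : 0 < ρ := Real.rpow_pos_of_pos hr _
  set E : ℂ := Complex.exp (-(2 * Real.pi * α : ℂ) * Complex.I) with hEdef
  have hE1 : ‖E‖ = 1 := by
    rw [hEdef, Complex.norm_exp]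
    norm_num [Complex.mul_re]
  set A : ℂ := ((ρ : ℝ) : ℂ) with hAdef
  have hAeq : (r:ℂ) ^ (1 - (α:ℂ)) = A := by
    rw [hAdef, hρdef, Complex.ofReal_cpow hr.le]
    push_cast
    ring_nf
  set C : ℕ → ℂ := fun n => (A ^ (n+1) - (E * A) ^ (n+1)) / ((Nat.factorial (n+1) : ℂ)) with hCdef
  set F : ℕ → ℝ → ℂ := fun n y => C n * ((Real.exp (-y) * y ^ (α * ((n:ℝ)+1)) : ℝ) : ℂ) with hFdef
  have hs : ∀ n : ℕ, (0:ℝ) < α * ((n:ℝ)+1) + 1 := fun n => by positivity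
  have hGint : ∀ n : ℕ, IntegrableOn (fun y : ℝ => Real.exp (-y) * y ^ (α * ((n:ℝ)+1))) (Set.Ioi (0:ℝ)) := by
    intro n
    have := Real.GammaIntegral_convergent (hs n)
    simpa using this
  have hFint : ∀ n : ℕ, Integrable (F n) (volume.restrict (Set.Ioi (0:ℝ))) := fun n =>
    ((hGint n).ofReal).const_mul _
  have hFval : ∀ n : ℕ, (∫ y in Set.Ioi (0:ℝ), F n y) = C n * ((Real.Gamma (α * ((n:ℝ)+1) + 1) : ℝ) : ℂ) := by
    intro n
    rw [hFdef]
    simp only []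
    rw [MeasureTheory.integral_const_mul, integral_ofReal'', Real.Gamma_eq_integral (hs n)]
    norm_num
  have hFnorm : ∀ n : ℕ, (∫ y in Set.Ioi (0:ℝ), ‖F n y‖)
      = ‖C n‖ * Real.Gamma (α * ((n:ℝ)+1) + 1) := by
    intro n
    rw [Real.Gamma_eq_integral (hs n), ← MeasureTheory.integral_const_mul]
    refine setIntegral_congr_fun measurableSet_Ioi (fun y hy => ?_)
    have hy0 : (0:ℝ) < y := hy
    rw [hFdef]
    simp only []
    rw [norm_mul, Complex.norm_real, Real.norm_eq_abs, _root_.abs_of_nonneg (by positivity)]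
    norm_num
  have hG0 : ∀ n : ℕ, 0 ≤ Real.Gamma (α * ((n:ℝ)+1) + 1) := fun n => (Real.Gamma_pos_of_pos (hs n)).le
  have hCbound : ∀ n : ℕ, ‖C n‖ ≤ 2 * ρ^(n+1) / ((Nat.factorial (n+1) : ℝ)) := by
    intro n
    rw [hCdef]
    simp only []
    rw [norm_div, Complex.norm_natCast]
    apply div_le_div_of_nonneg_right ?_ (by positivity)
    have h1 : ‖A ^ (n+1) - (E * A) ^ (n+1)‖
        ≤ ‖A ^ (n+1)‖ + ‖(E * A) ^ (n+1)‖ :=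
      norm_sub_le _ _
    have hA : ‖A‖ = ρ := by rw [hAdef, Complex.norm_real, Real.norm_eq_abs, _root_.abs_of_pos hρ]
    rw [norm_pow, norm_pow, norm_mul, hE1, hA, one_mul] at h1
    linarith
  set M : ℝ := ∫ y in Set.Ioi (0:ℝ), Real.exp (-y) * Real.exp ((2*ρ) * y ^ α) with hMdef
  have hsum : Summable fun n => ∫ y in Set.Ioi (0:ℝ), ‖F n y‖ := by
    refine Summable.of_nonneg_of_le (fun n => integral_nonneg (fun y => norm_nonneg _))
      (fun n => ?_) ((summable_geometric_of_lt_one (by norm_num) (by norm_num) :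
        Summable fun n : ℕ => ((1:ℝ)/2)^n).mul_left M)
    rw [hFnorm n]
    have key := gamma_term_bound hα0 hα1 (by positivity : (0:ℝ) < 2*ρ) n
    rw [← hMdef] at key
    calc ‖C n‖ * Real.Gamma (α * ((n:ℝ)+1) + 1)
        ≤ (2 * ρ^(n+1) / ((Nat.factorial (n+1) : ℝ))) * Real.Gamma (α * ((n:ℝ)+1) + 1) :=
          mul_le_mul_of_nonneg_right (hCbound n) (hG0 n)
      _ = (2 / 2^(n+1)) * (Real.Gamma (α * ((n:ℝ)+1) + 1) * (2*ρ)^(n+1) / ((Nat.factorial (n+1) : ℝ))) := by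
          rw [mul_pow]; field_simp
      _ ≤ (2 / 2^(n+1)) * M := mul_le_mul_of_nonneg_left key (by positivity)
      _ = M * ((1:ℝ)/2)^n := by
          rw [div_pow, one_pow, pow_succ]; ring
  have hpt : ∀ y ∈ Set.Ioi (0:ℝ), HasSum (fun n => F n y)
      ((Complex.exp (A * ((y ^ α : ℝ) : ℂ)) - Complex.exp (E * A * ((y ^ α : ℝ) : ℂ)))
        * ((Real.exp (-y) : ℝ) : ℂ)) := by
    intro y hy
    have hy0 : (0:ℝ) < y := hy
    set Y : ℂ := ((y ^ α : ℝ) : ℂ) with hYdef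
    have h1 : HasSum (fun k : ℕ => (A * Y) ^ k / (Nat.factorial k : ℂ)) (Complex.exp (A * Y)) := by
      rw [Complex.exp_eq_exp_ℂ]
      exact NormedSpace.expSeries_div_hasSum_exp (A * Y)
    have h2 : HasSum (fun k : ℕ => (E * A * Y) ^ k / (Nat.factorial k : ℂ))
        (Complex.exp (E * A * Y)) := by
      rw [Complex.exp_eq_exp_ℂ]
      exact NormedSpace.expSeries_div_hasSum_exp (E * A * Y)
    have h3 := (h1.sub h2).mul_right ((Real.exp (-y) : ℝ) : ℂ)
    have h4 := (hasSum_nat_add_iff' 1).mpr h3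
    simp only [Finset.range_one, Finset.sum_singleton, pow_zero, Nat.factorial_zero,
      Nat.cast_one, div_one, sub_self, zero_mul, sub_zero] at h4
    convert h4 using 1
    · rfl
    funext n
    have hYpow : ((y ^ (α * ((n:ℝ)+1)) : ℝ) : ℂ) = Y ^ (n+1) := by
      rw [show α*((n:ℝ)+1) = α * (((n+1:ℕ)):ℝ) by push_cast; ring,
        Real.rpow_mul hy0.le, Real.rpow_natCast, hYdef, Complex.ofReal_pow]
    rw [hFdef, hCdef]
    simp only []
    rw [Complex.ofReal_mul, hYpow]
    ring
  have hmain := MeasureTheory.hasSum_integral_of_summable_integral_norm hFint hsum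
  have hint_eq : (∫ y in Set.Ioi (0:ℝ), (∑' n, F n y))
      = ∫ y in Set.Ioi (0:ℝ),
          ((Complex.exp ((r:ℂ) ^ (1 - (α:ℂ)) * (y:ℂ) ^ (α:ℂ))
            - Complex.exp (E * (r:ℂ) ^ (1 - (α:ℂ)) * (y:ℂ) ^ (α:ℂ))) * Complex.exp (-(y:ℂ))) := by
    refine setIntegral_congr_fun measurableSet_Ioi (fun y hy => ?_)
    have hy0 : (0:ℝ) < y := hy
    have hYeq : (y:ℂ) ^ (α:ℂ) = ((y ^ α : ℝ) : ℂ) := (Complex.ofReal_cpow hy0.le α).symm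
    have hexp : Complex.exp (-(y:ℂ)) = ((Real.exp (-y) : ℝ) : ℂ) := by
      rw [Complex.ofReal_exp, Complex.ofReal_neg]
    rw [(hpt y hy).tsum_eq, hAeq, hYeq, hexp]
  have hfinal := hmain.mul_left ((2 * Real.pi * Complex.I)⁻¹ * (r:ℂ)⁻¹)
  rw [hint_eq] at hfinal
  have hGP : GalphaPlus α r = ((2 * Real.pi * Complex.I)⁻¹ * (r:ℂ)⁻¹) *
      ∫ y in Set.Ioi (0:ℝ),
        ((Complex.exp ((r:ℂ) ^ (1 - (α:ℂ)) * (y:ℂ) ^ (α:ℂ))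
          - Complex.exp (E * (r:ℂ) ^ (1 - (α:ℂ)) * (y:ℂ) ^ (α:ℂ))) * Complex.exp (-(y:ℂ))) := by
    rw [GalphaPlus, ← hEdef]
    simp_rw [div_mul_eq_mul_div, integral_div]
    ring
  rw [hGP]
  convert hfinal using 1
  · rfl
  funext n
  rw [hFval n]
  have hfac2 : Real.Gamma (((n:ℝ)+1)+1) = (Nat.factorial (n+1) : ℝ) := by
    rw [show ((n:ℝ)+1)+1 = ((n+1:ℕ):ℝ)+1 by push_cast; ring, Real.Gamma_nat_eq_factorial]
  have hEpow : Complex.exp (-(2 * (Real.pi:ℂ) * (((n:ℝ):ℂ) + 1) * (α:ℂ)) * Complex.I)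
      = E ^ (n+1) := by
    rw [hEdef, ← Complex.exp_nat_mul]
    congr 1
    push_cast
    ring
  have hrpow : r ^ (((n:ℝ)+1)*(1-α) - 1) = ρ^(n+1) / r := by
    have hexps : (((n:ℝ)+1)*(1-α)) = (1-α) * ((n+1:ℕ):ℝ) := by push_cast; ring
    rw [Real.rpow_sub hr, Real.rpow_one, hexps, Real.rpow_mul hr.le, Real.rpow_natCast, hρdef]
  rw [show (((n:ℝ)+1)*α + 1) = α*((n:ℝ)+1)+1 from by ring, hfac2, hEpow, hrpow,
    hCdef]
  simp only []
  rw [hAdef]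
  push_cast
  field_simp
  ring
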